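/- For the profile p_k = 1/k, the derivative in z of S_1(0,n;z) = Σ_{k=0}^{n} C(n,k) z^k (1-z)^{n-k} s_1(k+1,n) equals -Σ_{k=1}^n C(n-1,k-1) n z^{k-1} (1-z)^{n-k} p_k (s_0(k+1,n) - s_1(k+1,n)); more generally this derivative identity D_z S_1(0,n;z) = Σ_{k=1}^n C(n-1,k-1) n z^{k-1}(1-z)^{n-k} p_k (s_1(k+1,n) - s_0(k+1,n)) holds for any profile (p_k) with p_k ∈ [0,1). -/

import Mathlib

open Finset

noncomputable def s0 (p : ℕ → ℝ) (k n : ℕ) : ℝ := ∏ m ∈ Finset.Icc k n, (1 - p m)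

noncomputable def s1 (p : ℕ → ℝ) (k n : ℕ) : ℝ :=
  s0 p k n * ∑ i ∈ Finset.Icc k n, p i / (1 - p i)

private lemma term_hasDerivAt (c : ℝ) (k m : ℕ) (z : ℝ) :
    HasDerivAt (fun w : ℝ => c * w ^ k * (1 - w) ^ m)
      (c * ((k : ℝ) * z ^ (k - 1) * (1 - z) ^ m
        - z ^ k * ((m : ℝ) * (1 - z) ^ (m - 1)))) z := by
  have h1 : HasDerivAt (fun w : ℝ => c * w ^ k) (c * ((k : ℝ) * z ^ (k - 1))) z :=
    (hasDerivAt_pow k z).const_mul c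
  have h2 : HasDerivAt (fun w : ℝ => (1 - w) ^ m)
      (-((m : ℝ) * (1 - z) ^ (m - 1))) z := by
    have h0 : HasDerivAt (fun w : ℝ => 1 - w) (-1 : ℝ) z := by
      simpa using (hasDerivAt_id z).const_sub 1
    have := (hasDerivAt_pow m (1 - z)).comp z h0
    exact this.congr_deriv (by ring)
  have := h1.mul h2
  exact this.congr_deriv (by ring)

private lemma icc_insert (k n : ℕ) (hk : k ≤ n) :
    Finset.Icc k n = insert k (Finset.Icc (k + 1) n) := by
  ext x
  simp only [Finset.mem_Icc, Finset.mem_insert]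
  omega

private lemma s1_rec (p : ℕ → ℝ) (k n : ℕ) (hk : k ≤ n) (h : 1 - p k ≠ 0) :
    s1 p k n = (1 - p k) * s1 p (k + 1) n + p k * s0 p (k + 1) n := by
  have hnot : k ∉ Finset.Icc (k + 1) n := by simp
  unfold s1 s0
  rw [icc_insert k n hk, Finset.prod_insert hnot, Finset.sum_insert hnot]
  field_simp
  ring

theorem bernstein_deriv (p : ℕ → ℝ) (n : ℕ) (hn : 1 ≤ n)
    (hp : ∀ i, 0 ≤ p i ∧ p i < 1) (z : ℝ) :
    HasDerivAt
      (fun w : ℝ => ∑ k ∈ Finset.range (n + 1),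
        (n.choose k : ℝ) * w ^ k * (1 - w) ^ (n - k) * s1 p (k + 1) n)
      (∑ k ∈ Finset.Icc 1 n,
        ((n - 1).choose (k - 1) : ℝ) * n * z ^ (k - 1) * (1 - z) ^ (n - k) *
          p k * (s1 p (k + 1) n - s0 p (k + 1) n)) z := by
  obtain ⟨m, rfl⟩ : ∃ m, n = m + 1 := ⟨n - 1, by omega⟩
  set a : ℕ → ℝ := fun k => s1 p (k + 1) (m + 1) with ha
  have hderiv : HasDerivAt
      (fun w : ℝ => ∑ k ∈ Finset.range (m + 2),
        ((m + 1).choose k : ℝ) * w ^ k * (1 - w) ^ (m + 1 - k) * a k)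
      (∑ k ∈ Finset.range (m + 2),
        (((m + 1).choose k : ℝ) * ((k : ℝ) * z ^ (k - 1) * (1 - z) ^ (m + 1 - k)
          - z ^ k * (((m + 1 - k : ℕ) : ℝ) * (1 - z) ^ (m + 1 - k - 1)))) * a k) z :=
    HasDerivAt.fun_sum fun k _ =>
      (term_hasDerivAt ((m + 1).choose k : ℝ) k (m + 1 - k) z).mul_const (a k)
  have key : (∑ k ∈ Finset.range (m + 2),
        (((m + 1).choose k : ℝ) * ((k : ℝ) * z ^ (k - 1) * (1 - z) ^ (m + 1 - k)
          - z ^ k * (((m + 1 - k : ℕ) : ℝ) * (1 - z) ^ (m + 1 - k - 1)))) * a k)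
      = ∑ k ∈ Finset.Icc 1 (m + 1),
        ((m + 1 - 1).choose (k - 1) : ℝ) * ((m + 1 : ℕ) : ℝ) * z ^ (k - 1) * (1 - z) ^ (m + 1 - k) *
          p k * (s1 p (k + 1) (m + 1) - s0 p (k + 1) (m + 1)) := by
    have hsplit : (∑ k ∈ Finset.range (m + 2),
        (((m + 1).choose k : ℝ) * ((k : ℝ) * z ^ (k - 1) * (1 - z) ^ (m + 1 - k)
          - z ^ k * (((m + 1 - k : ℕ) : ℝ) * (1 - z) ^ (m + 1 - k - 1)))) * a k)
        = (∑ k ∈ Finset.range (m + 2),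
            ((m + 1).choose k : ℝ) * (k : ℝ) * z ^ (k - 1) * (1 - z) ^ (m + 1 - k) * a k)
        - (∑ k ∈ Finset.range (m + 2),
            ((m + 1).choose k : ℝ) * (((m + 1 - k : ℕ) : ℝ))
              * z ^ k * (1 - z) ^ (m + 1 - k - 1) * a k) := by
      rw [← Finset.sum_sub_distrib]
      exact Finset.sum_congr rfl fun k _ => by ring
    rw [hsplit, Finset.sum_range_succ' _ (m + 1), Finset.sum_range_succ _ (m + 1)]
    simp only [Nat.cast_zero, Nat.sub_self, Nat.cast_ofNat, mul_zero, zero_mul,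
      add_zero, Nat.cast_zero]
    rw [← Finset.sum_sub_distrib]
    rw [← Finset.Ico_add_one_right_eq_Icc, Finset.sum_Ico_eq_sum_range]
    simp only [Nat.add_sub_cancel]
    refine Finset.sum_congr rfl fun j hj => ?_
    simp only [Finset.mem_range] at hj
    have hjm : j ≤ m := by omega
    -- binomial identities
    have hb1 : (((m + 1).choose (j + 1) : ℕ) : ℝ) * ((j + 1 : ℕ) : ℝ)
        = ((m + 1 : ℕ) : ℝ) * ((m.choose j : ℕ) : ℝ) := by
      rw [← Nat.cast_mul, ← Nat.cast_mul, ← Nat.add_one_mul_choose_eq]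
    have hb2 : (((m + 1).choose j : ℕ) : ℝ) * (((m + 1 - j : ℕ)) : ℝ)
        = ((m + 1 : ℕ) : ℝ) * ((m.choose j : ℕ) : ℝ) := by
      rw [← Nat.cast_mul, ← Nat.cast_mul, ← Nat.choose_mul_succ_eq, Nat.mul_comm]
    -- recursion for a
    have hrec : a (j + 1) - a j
        = p (j + 1) * (s1 p (j + 1 + 1) (m + 1) - s0 p (j + 1 + 1) (m + 1)) := by
      have h1 : (1 : ℝ) - p (j + 1) ≠ 0 := by
        have := (hp (j + 1)).2; linarith
      have := s1_rec p (j + 1) (m + 1) (by omega) h1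
      simp only [ha]
      rw [this]
      ring
    have he1 : m + 1 - (j + 1) = m - j := by omega
    have he2 : m + 1 - j - 1 = m - j := by omega
    have he4 : j + 1 - 1 = j := by omega
    rw [show (1 : ℕ) + j = j + 1 from Nat.add_comm 1 j, he1, he2, he4]
    have : (((m + 1).choose (j + 1) : ℕ) : ℝ) * ((j + 1 : ℕ) : ℝ) * z ^ (j + 1 - 1)
          * (1 - z) ^ (m - j) * a (j + 1)
        - (((m + 1).choose j : ℕ) : ℝ) * (((m + 1 - j : ℕ)) : ℝ) * z ^ j
          * (1 - z) ^ (m - j) * a j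
        = ((m + 1 : ℕ) : ℝ) * ((m.choose j : ℕ) : ℝ) * z ^ j * (1 - z) ^ (m - j)
          * (a (j + 1) - a j) := by
      rw [Nat.add_sub_cancel]
      linear_combination (z ^ j * (1 - z) ^ (m - j) * a (j + 1)) * hb1
        - (z ^ j * (1 - z) ^ (m - j) * a j) * hb2
    push_cast at this ⊢
    rw [this, hrec]
    ring
  rw [key.symm]
  exact hderiv
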